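/- The Wilson score interval width function w(α,n,x̄) = (2χ/(n+χ²))·√(n·x̄(1−x̄) + χ²/4), with χ > 0 fixed, satisfies: for all n > 0 and 0 ≤ x̄ ≤ 1, the partial derivative of w with respect to n is strictly negative. -/

import Mathlib

/-- The Wilson score interval width function is strictly decreasing in the sample size `n`. -/
theorem wilson_width_deriv_n_neg (χ : ℝ) (hχ : 0 < χ) (n : ℝ) (hn : 0 < n)
    (x : ℝ) (hx : x ∈ Set.Icc (0:ℝ) 1) :
    deriv (fun t : ℝ => 2 * χ / (t + χ ^ 2) * Real.sqrt (t * (x * (1 - x)) + χ ^ 2 / 4)) n < 0 := by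
  obtain ⟨hx0, hx1⟩ := hx
  set a := x * (1 - x) with ha
  have ha0 : 0 ≤ a := by nlinarith
  have ha4 : a ≤ 1/4 := by nlinarith [sq_nonneg (x - 1/2)]
  have hq : 0 < n + χ ^ 2 := by positivity
  have hc : 0 < n * a + χ ^ 2 / 4 := by positivity
  set s := Real.sqrt (n * a + χ ^ 2 / 4) with hs
  have hspos : 0 < s := Real.sqrt_pos.mpr hc
  have hs2 : s ^ 2 = n * a + χ ^ 2 / 4 := Real.sq_sqrt hc.le
  have hg : HasDerivAt (fun t : ℝ => 2 * χ / (t + χ ^ 2)) (-(2*χ) / (n + χ^2)^2) n := by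
    have h1 : HasDerivAt (fun t : ℝ => t + χ ^ 2) 1 n := (hasDerivAt_id n).add_const _
    have h2 := (h1.inv (ne_of_gt hq)).const_mul (2*χ)
    have hfun : (fun t : ℝ => 2 * χ * (t + χ ^ 2)⁻¹) = (fun t : ℝ => 2 * χ / (t + χ ^ 2)) := by
      funext t; rw [div_eq_mul_inv]
    simp only [Pi.inv_apply] at h2
    rw [hfun] at h2
    refine h2.congr_deriv ?_
    ring
  have hh : HasDerivAt (fun t : ℝ => Real.sqrt (t * a + χ ^ 2 / 4)) (a / (2 * s)) n := by
    have h1 : HasDerivAt (fun t : ℝ => t * a + χ ^ 2 / 4) a n := by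
      simpa using ((hasDerivAt_id n).mul_const a).add_const (χ ^ 2 / 4)
    have h2 := (Real.hasDerivAt_sqrt (ne_of_gt hc)).comp n h1
    refine h2.congr_deriv ?_
    rw [← hs]; ring
  have hf := hg.mul hh
  rw [show deriv (fun t : ℝ => 2 * χ / (t + χ ^ 2) * Real.sqrt (t * a + χ ^ 2 / 4)) n = _ from hf.deriv]
  have heq : (-(2*χ) / (n + χ^2)^2) * s + (2 * χ / (n + χ ^ 2)) * (a / (2 * s))
      = χ * (a * (n + χ^2) - 2 * s^2) / ((n + χ^2)^2 * s) := by
    field_simp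
    ring
  rw [heq]
  have hX : a * (n + χ^2) - 2 * s ^ 2 < 0 := by
    nlinarith [mul_nonneg (by linarith : (0:ℝ) ≤ 1/4 - a) (sq_nonneg χ),
      mul_nonneg ha0 hn.le, sq_nonneg χ]
  exact div_neg_of_neg_of_pos (mul_neg_of_pos_of_neg hχ hX) (by positivity)
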